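/- Decay of the Glassey–Strauss magnetic bulk kernel: for every v ∈ ℝ³ and every ω ∈ ℝ³ with |ω| = 1, one has | ω × v̂ | · (1 − |v̂|²) / (1 + v̂·ω)² ≤ 8 √(1 + |v|²). -/

import Mathlib

open MeasureTheory Set

noncomputable section

/-- Physical space `ℝ³`, realized as functions `Fin 3 → ℝ`. -/
abbrev V3 : Type := Fin 3 → ℝ

/-- Euclidean inner product on `ℝ³`. -/
def dot3 (a b : V3) : ℝ := a 0 * b 0 + a 1 * b 1 + a 2 * b 2

/-- Euclidean norm on `ℝ³`. -/
def enorm3 (a : V3) : ℝ := Real.sqrt (dot3 a a)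

/-- Cross product on `ℝ³`. -/
def cross3 (a b : V3) : V3 :=
  ![a 1 * b 2 - a 2 * b 1, a 2 * b 0 - a 0 * b 2, a 0 * b 1 - a 1 * b 0]

/-- `⟨v⟩ = √(1 + |v|²)`. -/
def jap (v : V3) : ℝ := Real.sqrt (1 + dot3 v v)

/-- Relativistic velocity `v̂ = v / ⟨v⟩`. -/
def vhat (v : V3) : V3 := (jap v)⁻¹ • v

/-- The open upper half space `Ω = {x ∈ ℝ³ : x₃ > 0}`. -/
def halfSpace : Set V3 := {x : V3 | 0 < x 2}

/-- Embedding of the boundary `∂Ω ≃ ℝ²` into `ℝ³`. -/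
def bdryPt (y : ℝ × ℝ) : V3 := ![y.1, y.2, 0]

/-- Projection `(x₁,x₂,x₃) ↦ (x₁,x₂,0)` onto the boundary. -/
def proj0 (x : V3) : V3 := ![x 0, x 1, 0]

/-- Reflection `x̄ = (x₁,x₂,−x₃)`. -/
def refl3 (x : V3) : V3 := ![x 0, x 1, -(x 2)]

/-- Time derivative `∂ₜ` of a space-time function. -/
def pdt (f : ℝ × V3 → ℝ) : ℝ × V3 → ℝ := fun q => fderiv ℝ f q (1, 0)

/-- Spatial partial derivative `∂_{xᵢ}` of a space-time function. -/
def pdx (i : Fin 3) (f : ℝ × V3 → ℝ) : ℝ × V3 → ℝ := fun q => fderiv ℝ f q (0, Pi.single i 1)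

/-- Partial derivative `∂_{xᵢ}` of a function on `ℝ³`. -/
def sdx (i : Fin 3) (u : V3 → ℝ) : V3 → ℝ := fun x => fderiv ℝ u x (Pi.single i 1)

/-- `i`-th component of a space-time vector field. -/
def comp3 (F : ℝ × V3 → V3) (i : Fin 3) : ℝ × V3 → ℝ := fun q => F q i

/-- Spatial divergence of a space-time vector field. -/
def divX (F : ℝ × V3 → V3) (q : ℝ × V3) : ℝ := ∑ i : Fin 3, pdx i (comp3 F i) q

/-- Spatial curl of a space-time vector field. -/
def curlX (F : ℝ × V3 → V3) (q : ℝ × V3) : V3 :=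
  ![pdx 1 (comp3 F 2) q - pdx 2 (comp3 F 1) q,
    pdx 2 (comp3 F 0) q - pdx 0 (comp3 F 2) q,
    pdx 0 (comp3 F 1) q - pdx 1 (comp3 F 0) q]

/-- Curl of a vector field on `ℝ³`. -/
def curlS (F : V3 → V3) (x : V3) : V3 :=
  ![sdx 1 (fun z => F z 2) x - sdx 2 (fun z => F z 1) x,
    sdx 2 (fun z => F z 0) x - sdx 0 (fun z => F z 2) x,
    sdx 0 (fun z => F z 1) x - sdx 1 (fun z => F z 0) x]

/-- Divergence of a vector field on `ℝ³`. -/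
def divS (F : V3 → V3) (x : V3) : ℝ := ∑ i : Fin 3, sdx i (fun z => F z i) x

/-- Spatial Laplacian of a space-time function. -/
def lapST (f : ℝ × V3 → ℝ) (q : ℝ × V3) : ℝ := ∑ i : Fin 3, pdx i (pdx i f) q

/-- Laplacian of a function on `ℝ³`. -/
def lapS (u : V3 → ℝ) (x : V3) : ℝ := ∑ i : Fin 3, sdx i (sdx i u) x

/-- Open space-time domain `(0,T) × Ω`. -/
def stDom (T : ℝ) : Set (ℝ × V3) := Ioo (0 : ℝ) T ×ˢ halfSpace

/-- Closed space-time domain `[0,T] × Ω̄`. -/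
def stDomCl (T : ℝ) : Set (ℝ × V3) := Icc (0 : ℝ) T ×ˢ closure halfSpace

/-- Lateral boundary domain `(0,T) × ∂Ω`, with `∂Ω ≃ ℝ²`. -/
def bDom (T : ℝ) : Set (ℝ × (ℝ × ℝ)) := Ioo (0 : ℝ) T ×ˢ (univ : Set (ℝ × ℝ))


lemma dot3_self_nonneg (a : V3) : 0 ≤ dot3 a a := by
  unfold dot3
  nlinarith [mul_self_nonneg (a 0), mul_self_nonneg (a 1), mul_self_nonneg (a 2)]

lemma dot3_comm (a b : V3) : dot3 a b = dot3 b a := by unfold dot3; ring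

lemma enorm3_sq (a : V3) : enorm3 a ^ 2 = dot3 a a := by
  unfold enorm3; rw [Real.sq_sqrt (dot3_self_nonneg a)]

lemma lagrange3 (a b : V3) :
    dot3 (cross3 a b) (cross3 a b) = dot3 a a * dot3 b b - (dot3 a b) ^ 2 := by
  simp [dot3, cross3]
  ring

lemma dot3_smul_left (c : ℝ) (a b : V3) : dot3 (c • a) b = c * dot3 a b := by
  simp [dot3, Pi.smul_apply, smul_eq_mul]; ring

/-- decay of the Glassey–Strauss magnetic bulk kernel. -/
theorem magnetic_bulk_kernel_decay (v ω : V3) (hω : enorm3 ω = 1) :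
    enorm3 (cross3 ω (vhat v)) * (1 - dot3 (vhat v) (vhat v)) / (1 + dot3 (vhat v) ω) ^ 2
      ≤ 8 * Real.sqrt (1 + dot3 v v) := by
  set A := dot3 v v with hAdef
  have hA : 0 ≤ A := dot3_self_nonneg v
  set J := jap v with hJdef
  have hJ2 : J ^ 2 = 1 + A := Real.sq_sqrt (by linarith)
  have hJ1 : (1 : ℝ) ≤ J := by
    have := Real.sqrt_le_sqrt (show (1:ℝ) ≤ 1 + A by linarith)
    rwa [Real.sqrt_one] at this
  have hJ0 : (0 : ℝ) < J := by linarith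
  have hω1 : dot3 ω ω = 1 := by
    have := enorm3_sq ω
    rw [hω] at this; linarith
  set p := dot3 v ω with hpdef
  -- p² ≤ A
  have hB : 0 ≤ A - p ^ 2 := by
    have h := dot3_self_nonneg (cross3 ω v)
    rw [lagrange3 ω v, hω1, dot3_comm ω v] at h
    linarith
  have ht : 0 < J + p := by nlinarith [sq_nonneg (J + p)]
  -- scalar forms of the quantities in the goal
  have hs : dot3 (vhat v) (vhat v) = A / J ^ 2 := by
    rw [show vhat v = J⁻¹ • v from rfl, dot3_smul_left, dot3_comm, dot3_smul_left,
      dot3_comm v v, eq_div_iff (by positivity : (J : ℝ) ^ 2 ≠ 0)]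
    field_simp
    rfl
  have hd : dot3 (vhat v) ω = p / J := by
    rw [show vhat v = J⁻¹ • v from rfl, dot3_smul_left]
    field_simp
    rfl
  set E := enorm3 (cross3 ω (vhat v)) with hEdef
  have hE0 : 0 ≤ E := Real.sqrt_nonneg _
  have hE2 : E ^ 2 = (A - p ^ 2) / J ^ 2 := by
    rw [hEdef, enorm3_sq, lagrange3, hω1, dot3_comm ω (vhat v), hs, hd,
      eq_div_iff (by positivity : (J : ℝ) ^ 2 ≠ 0)]
    field_simp
  -- the key bound : E ≤ 8 J (J+p)²
  have key : E ≤ 8 * J * (J + p) ^ 2 := by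
    have h1 : 1 + (A - p ^ 2) ≤ 2 * J * (J + p) := by nlinarith [sq_nonneg (J + p)]
    have h2 : A - p ^ 2 ≤ 4 * (1 + (A - p ^ 2)) ^ 4 := by
      nlinarith [sq_nonneg (A - p ^ 2), sq_nonneg ((A - p ^ 2) * (A - p ^ 2)),
        pow_le_pow_left₀ hB (le_refl (A - p^2)) 3]
    have h3 : (1 + (A - p ^ 2)) ^ 4 ≤ (2 * J * (J + p)) ^ 4 :=
      pow_le_pow_left₀ (by linarith) h1 4
    have hEsq : E ^ 2 ≤ (8 * J * (J + p) ^ 2) ^ 2 := by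
      rw [hE2, div_le_iff₀ (by positivity)]
      calc A - p ^ 2 ≤ 4 * (1 + (A - p ^ 2)) ^ 4 := h2
        _ ≤ 4 * (2 * J * (J + p)) ^ 4 := by linarith
        _ = (8 * J * (J + p) ^ 2) ^ 2 * J ^ 2 := by ring
    nlinarith [hEsq, hE0, mul_pos (mul_pos (by norm_num : (0:ℝ) < 8) hJ0) (pow_pos ht 2)]
  -- rewrite the goal into scalar form
  have hRHS : Real.sqrt (1 + dot3 v v) = J := rfl
  rw [hRHS, hs, hd]
  have e1 : 1 - A / J ^ 2 = 1 / J ^ 2 := by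
    field_simp
    linarith
  have e2 : 1 + p / J = (J + p) / J := by field_simp
  rw [e1, e2]
  have e3 : E * (1 / J ^ 2) / ((J + p) / J) ^ 2 = E / (J + p) ^ 2 := by
    field_simp
  rw [e3, div_le_iff₀ (by positivity)]
  linarith
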